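/- Let H be an n-vertex {2,3}-uniform linear hypergraph containing no Berge path of length 3. Then the two-shadow ∂H has at most 3(n-1)/2 edges. -/

import Mathlib

/-- A Berge path of length `k` in a hypergraph `H`: `k+1` distinct vertices
`v 0, …, v k` and `k` distinct hyperedges `h 0, …, h (k-1)` of `H` with
`{v i, v (i+1)} ⊆ h i` for all `i`. -/
def HasBergePath {V : Type*} (H : Finset (Finset V)) (k : ℕ) : Prop :=
  ∃ (v : Fin (k + 1) → V) (h : Fin k → Finset V),
    Function.Injective v ∧ Function.Injective h ∧
    ∀ i : Fin k, h i ∈ H ∧ v i.castSucc ∈ h i ∧ v i.succ ∈ h i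

/-- A hypergraph is linear if any two distinct hyperedges share at most one vertex. -/
def IsLinear {V : Type*} [DecidableEq V] (H : Finset (Finset V)) : Prop :=
  ∀ e₁ ∈ H, ∀ e₂ ∈ H, e₁ ≠ e₂ → (e₁ ∩ e₂).card ≤ 1

/-- The number of edges of the two-shadow `∂H` of a hypergraph `H`, i.e. the number
of `2`-element vertex sets contained in some hyperedge of `H`. -/
def shadowEdgeCount {V : Type*} [DecidableEq V] (H : Finset (Finset V)) : ℕ :=
  (H.biUnion fun e => e.powersetCard 2).card


section Aux
set_option linter.unusedSectionVars false
variable {V : Type*} [DecidableEq V]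

lemma pair_card_le {x y : V} {s : Finset V} (hx : x ∈ s) (hy : y ∈ s) (hxy : x ≠ y) :
    2 ≤ s.card := by
  have hsub : ({x, y} : Finset V) ⊆ s := by
    intro z hz
    simp only [Finset.mem_insert, Finset.mem_singleton] at hz
    rcases hz with rfl | rfl <;> assumption
  calc 2 = ({x, y} : Finset V).card := (Finset.card_pair hxy).symm
    _ ≤ s.card := Finset.card_le_card hsub

lemma not_two_common {H : Finset (Finset V)} (hlin : IsLinear H) {e f : Finset V}
    (he : e ∈ H) (hf : f ∈ H) (hef : e ≠ f) {x y : V}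
    (hx : x ∈ e) (hx' : x ∈ f) (hy : y ∈ e) (hy' : y ∈ f) (hxy : x ≠ y) : False := by
  have h1 := hlin e he f hf hef
  have h2 : 2 ≤ (e ∩ f).card :=
    pair_card_le (Finset.mem_inter.2 ⟨hx, hx'⟩) (Finset.mem_inter.2 ⟨hy, hy'⟩) hxy
  omega

lemma berge_of {H : Finset (Finset V)} {e f g : Finset V} {a x y b : V}
    (he : e ∈ H) (hf : f ∈ H) (hg : g ∈ H)
    (hef : e ≠ f) (heg : e ≠ g) (hfg : f ≠ g)
    (hax : a ≠ x) (hay : a ≠ y) (hab : a ≠ b) (hxy : x ≠ y) (hxb : x ≠ b) (hyb : y ≠ b)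
    (hae : a ∈ e) (hxe : x ∈ e) (hxf : x ∈ f) (hyf : y ∈ f) (hyg : y ∈ g) (hbg : b ∈ g) :
    HasBergePath H 3 := by
  refine ⟨![a, x, y, b], ![e, f, g], ?_, ?_, ?_⟩
  · intro i j hij
    fin_cases i <;> fin_cases j <;> simp_all
  · intro i j hij
    fin_cases i <;> fin_cases j <;> simp_all
  · intro i
    fin_cases i <;> exact ⟨by assumption, by simp; assumption, by simp; assumption⟩

lemma struct {H : Finset (Finset V)}
    (hunif : ∀ e ∈ H, e.card = 2 ∨ e.card = 3) (hlin : IsLinear H)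
    (hforb : ¬ HasBergePath H 3)
    {e f g : Finset V} {x y : V}
    (he : e ∈ H) (hf : f ∈ H) (hg : g ∈ H)
    (hef : e ≠ f) (heg : e ≠ g) (hfg : f ≠ g)
    (hxe : x ∈ e) (hxf : x ∈ f) (hyf : y ∈ f) (hyg : y ∈ g) (hxy : x ≠ y) :
    ∃ v, v ≠ x ∧ v ≠ y ∧ e = {x, v} ∧ f = {x, y} ∧ g = {y, v} := by
  have hye : y ∉ e := fun hye => not_two_common hlin he hf hef hxe hxf hye hyf hxy
  have hxg : x ∉ g := fun hxg => not_two_common hlin hf hg hfg hxf hxg hyf hyg hxy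
  by_cases hcase : ∃ a ∈ e, ∃ b ∈ g, a ≠ x ∧ b ≠ y ∧ a ≠ b
  · obtain ⟨a, hae, b, hbg, hax, hby, hab⟩ := hcase
    have hay : a ≠ y := by rintro rfl; exact hye hae
    have hxb : x ≠ b := by rintro rfl; exact hxg hbg
    exact absurd (berge_of he hf hg hef heg hfg hax hay hab hxy
      hxb (Ne.symm hby) hae hxe hxf hyf hyg hbg) hforb
  push_neg at hcase
  -- get a ∈ e, a ≠ x and b ∈ g, b ≠ y
  have hce : 2 ≤ e.card := by rcases hunif e he with h | h <;> omega
  have hcg : 2 ≤ g.card := by rcases hunif g hg with h | h <;> omega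
  obtain ⟨a, hae, hax⟩ := Finset.exists_mem_ne (s := e) (by omega) x
  obtain ⟨b, hbg, hby⟩ := Finset.exists_mem_ne (s := g) (by omega) y
  have hab : a = b := hcase a hae b hbg hax hby
  subst hab
  -- v := a
  have hay : a ≠ y := by rintro rfl; exact hye hae
  have hax2 : a ≠ x := by rintro rfl; exact hxg hbg
  refine ⟨a, hax2, hay, ?_, ?_, ?_⟩
  · -- e = {x, a}
    apply Finset.Subset.antisymm
    · intro u hu
      by_cases hux : u = x
      · simp [hux]
      · have := hcase u hu a hbg hux hay; simp [this]
    · intro u hu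
      simp only [Finset.mem_insert, Finset.mem_singleton] at hu
      rcases hu with rfl | rfl <;> assumption
  · -- f = {x, y}
    apply Finset.Subset.antisymm
    · intro z hz
      by_contra hzxy
      simp only [Finset.mem_insert, Finset.mem_singleton, not_or] at hzxy
      obtain ⟨hzx, hzy⟩ := hzxy
      have hza : z ≠ a := by
        rintro rfl
        exact not_two_common hlin he hf hef hxe hxf hae hz hax.symm
      -- path: y, g, a, e, x, f, z
      exact absurd (berge_of hg he hf heg.symm hfg.symm hef
        hay.symm hxy.symm (Ne.symm hzy) hax hza.symm (Ne.symm hzx)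
        hyg hbg hae hxe hxf hz) hforb
    · intro u hu
      simp only [Finset.mem_insert, Finset.mem_singleton] at hu
      rcases hu with rfl | rfl <;> assumption
  · -- g = {y, a}
    apply Finset.Subset.antisymm
    · intro u hu
      by_cases huy : u = y
      · simp [huy]
      · have := (hcase a hae u hu hax huy).symm; simp [this]
    · intro u hu
      simp only [Finset.mem_insert, Finset.mem_singleton] at hu
      rcases hu with rfl | rfl <;> assumption

lemma tri_closed {H : Finset (Finset V)}
    (hunif : ∀ e ∈ H, e.card = 2 ∨ e.card = 3) (hlin : IsLinear H)
    (hforb : ¬ HasBergePath H 3)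
    {a b c : V} (hab : a ≠ b) (hac : a ≠ c) (hbc : b ≠ c)
    (h1 : ({a, b} : Finset V) ∈ H) (h2 : ({b, c} : Finset V) ∈ H)
    (h3 : ({a, c} : Finset V) ∈ H)
    {g : Finset V} (hg : g ∈ H) (hga : a ∈ g) :
    g = {a, b} ∨ g = {a, c} := by
  by_cases hg1 : g = {a, b}
  · exact Or.inl hg1
  by_cases hg2 : g = {a, c}
  · exact Or.inr hg2
  exfalso
  have hg3 : g ≠ {b, c} := by
    rintro rfl
    simp only [Finset.mem_insert, Finset.mem_singleton] at hga
    rcases hga with rfl | rfl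
    · exact hab rfl
    · exact hac rfl
  have d12 : ({a, b} : Finset V) ≠ {b, c} := by
    intro h
    have : a ∈ ({b, c} : Finset V) := h ▸ Finset.mem_insert_self a {b}
    simp only [Finset.mem_insert, Finset.mem_singleton] at this
    tauto
  obtain ⟨v, hva, hvb, hgeq, -, hh⟩ := struct hunif hlin hforb hg h1 h2 hg1 hg3 d12
    hga (Finset.mem_insert_self a {b}) (by simp) (Finset.mem_insert_self b {c}) hab
  have hcv : c = v := by
    have : c ∈ ({b, v} : Finset V) := hh ▸ (by simp)
    simp only [Finset.mem_insert, Finset.mem_singleton] at this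
    rcases this with rfl | rfl
    · exact absurd rfl hbc
    · rfl
  exact hg2 (hcv ▸ hgeq)

lemma berge_mono {H H' : Finset (Finset V)} (hsub : H' ⊆ H) {k : ℕ} :
    HasBergePath H' k → HasBergePath H k := by
  rintro ⟨v, h, hv, hh, hp⟩
  exact ⟨v, h, hv, hh, fun i => ⟨hsub (hp i).1, (hp i).2⟩⟩

lemma linear_mono {H H' : Finset (Finset V)} (hsub : H' ⊆ H) (hlin : IsLinear H) :
    IsLinear H' := fun e he f hf hef => hlin e (hsub he) f (hsub hf) hef

lemma key : ∀ (n : ℕ) (H : Finset (Finset V)), H.card ≤ n →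
    (∀ e ∈ H, e.card = 2 ∨ e.card = 3) → IsLinear H → ¬ HasBergePath H 3 → H.Nonempty →
    2 * (∑ e ∈ H, e.card.choose 2) + 3 ≤ 3 * (H.biUnion id).card := by
  intro n
  induction n with
  | zero =>
    intro H hc _ _ _ hne
    rw [Nat.le_zero, Finset.card_eq_zero] at hc
    exact absurd hc hne.ne_empty
  | succ n ih =>
    intro H hcard hunif hlin hforb hne
    by_cases htri : ∃ a b c : V, a ≠ b ∧ a ≠ c ∧ b ≠ c ∧
        ({a, b} : Finset V) ∈ H ∧ ({b, c} : Finset V) ∈ H ∧ ({a, c} : Finset V) ∈ H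
    · -- triangle case
      obtain ⟨a, b, c, hab, hac, hbc, h1, h2, h3⟩ := htri
      have d12 : ({a, b} : Finset V) ≠ {b, c} := by
        intro h
        have : a ∈ ({b, c} : Finset V) := h ▸ Finset.mem_insert_self a {b}
        simp only [Finset.mem_insert, Finset.mem_singleton] at this; tauto
      have d13 : ({a, b} : Finset V) ≠ {a, c} := by
        intro h
        have : b ∈ ({a, c} : Finset V) := h ▸ (by simp)
        simp only [Finset.mem_insert, Finset.mem_singleton] at this; tauto
      have d23 : ({b, c} : Finset V) ≠ {a, c} := by
        intro h
        have : b ∈ ({a, c} : Finset V) := h ▸ Finset.mem_insert_self b {c}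
        simp only [Finset.mem_insert, Finset.mem_singleton] at this; tauto
      set T : Finset (Finset V) := {{a, b}, {b, c}, {a, c}} with hT
      have hTsub : T ⊆ H := by
        intro s hs
        simp only [hT, Finset.mem_insert, Finset.mem_singleton] at hs
        rcases hs with rfl | rfl | rfl <;> assumption
      have hTcard : T.card = 3 := by
        rw [hT, Finset.card_insert_of_notMem (by simp [d12, d13]),
          Finset.card_insert_of_notMem (by simp [d23]), Finset.card_singleton]
      set H' := H \ T with hH'
      have hsub : H' ⊆ H := Finset.sdiff_subset
      -- closure: every edge meeting {a,b,c} is in T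
      have hclose : ∀ g ∈ H, g ∉ T → ∀ u ∈ g, u ≠ a ∧ u ≠ b ∧ u ≠ c := by
        intro g hg hgT u hug
        refine ⟨?_, ?_, ?_⟩
        · rintro rfl
          rcases tri_closed hunif hlin hforb hab hac hbc h1 h2 h3 hg hug with h | h <;>
            simp [hT, h] at hgT
        · rintro rfl
          have h1' : ({u, a} : Finset V) ∈ H := by rwa [Finset.pair_comm]
          have h3' : ({u, c} : Finset V) ∈ H := h2
          rcases tri_closed hunif hlin hforb (Ne.symm hab) hbc hac h1' h3 h3' hg hug with h | h
          · rw [Finset.pair_comm] at h; simp [hT, h] at hgT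
          · simp [hT, h] at hgT
        · rintro rfl
          have h1' : ({u, a} : Finset V) ∈ H := by rwa [Finset.pair_comm]
          have h2' : ({u, b} : Finset V) ∈ H := by rwa [Finset.pair_comm]
          rcases tri_closed hunif hlin hforb (Ne.symm hac) (Ne.symm hbc) hab h1'
            h1 h2' hg hug with h | h
          · rw [Finset.pair_comm] at h; simp [hT, h] at hgT
          · rw [Finset.pair_comm] at h; simp [hT, h] at hgT
      -- supp decomposition
      have habc : ({a, b, c} : Finset V).card = 3 := by
        rw [Finset.card_insert_of_notMem (by simp [hab, hac]),
          Finset.card_insert_of_notMem (by simp [hbc]), Finset.card_singleton]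
      have hsuppU : H.biUnion id = (H'.biUnion id) ∪ {a, b, c} := by
        ext u
        simp only [Finset.mem_biUnion, Finset.mem_union, id_eq]
        constructor
        · rintro ⟨g, hg, hug⟩
          by_cases hgT : g ∈ T
          · right
            have hsubg : g ⊆ ({a, b, c} : Finset V) := by
              simp only [hT, Finset.mem_insert, Finset.mem_singleton] at hgT
              rcases hgT with rfl | rfl | rfl <;> intro z hz <;>
                simp only [Finset.mem_insert, Finset.mem_singleton] at hz ⊢ <;> tauto
            exact hsubg hug
          · exact Or.inl ⟨g, Finset.mem_sdiff.2 ⟨hg, hgT⟩, hug⟩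
        · rintro (⟨g, hg, hug⟩ | hu)
          · exact ⟨g, hsub hg, hug⟩
          · simp only [Finset.mem_insert, Finset.mem_singleton] at hu
            rcases hu with rfl | rfl | rfl
            · exact ⟨_, h1, by simp⟩
            · exact ⟨_, h1, by simp⟩
            · exact ⟨_, h3, by simp⟩
      have hdisj : Disjoint (H'.biUnion id) ({a, b, c} : Finset V) := by
        rw [Finset.disjoint_left]
        rintro u hu hu2
        obtain ⟨g, hg, hug⟩ := Finset.mem_biUnion.1 hu
        obtain ⟨hgH, hgT⟩ := Finset.mem_sdiff.1 hg
        obtain ⟨hna, hnb, hnc⟩ := hclose g hgH hgT u hug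
        simp only [Finset.mem_insert, Finset.mem_singleton] at hu2
        tauto
      have hsuppcard : (H.biUnion id).card = (H'.biUnion id).card + 3 := by
        rw [hsuppU, Finset.card_union_of_disjoint hdisj, habc]
      -- sum decomposition
      have hsumT : ∑ e ∈ T, e.card.choose 2 = 3 := by
        rw [hT, Finset.sum_insert (by simp [d12, d13]),
          Finset.sum_insert (by simp [d23]), Finset.sum_singleton,
          Finset.card_pair hab, Finset.card_pair hbc, Finset.card_pair hac]
        decide
      have hsum : ∑ e ∈ H', e.card.choose 2 + 3 = ∑ e ∈ H, e.card.choose 2 := by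
        rw [← hsumT]; exact Finset.sum_sdiff hTsub
      rcases H'.eq_empty_or_nonempty with hE | hNE
      · rw [← hsum, hsuppcard, hE]
        simp
      · have hcard' : H'.card ≤ n := by
          rw [hH', Finset.card_sdiff_of_subset hTsub, hTcard]
          omega
        have := ih H' hcard' (fun e he => hunif e (hsub he)) (linear_mono hsub hlin)
          (fun h => hforb (berge_mono hsub h)) hNE
        omega
    · by_cases hmeet : ∃ e ∈ H, ∃ f ∈ H, e ≠ f ∧ (e ∩ f).Nonempty
      · -- star case
        obtain ⟨e, he, f, hf, hef, w, hw⟩ := hmeet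
        obtain ⟨hwe, hwf⟩ := Finset.mem_inter.1 hw
        have hpriv : ∀ u ∈ e, u ≠ w → ∀ g ∈ H, g ≠ e → u ∉ g := by
          intro u hu huw g hg hge hug
          have hgf : g ≠ f := by
            rintro rfl
            exact not_two_common hlin he hg hef hu hug hwe hwf huw
          obtain ⟨v, hvu, hvw, hgeq, heeq, hfeq⟩ :=
            struct hunif hlin hforb hg he hf hge hgf hef hug hu hwe hwf huw
          exact htri ⟨u, w, v, huw, hvu.symm, hvw.symm, heeq ▸ he, hfeq ▸ hf, hgeq ▸ hg⟩
        set H' := H.erase e with hH'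
        have hsub : H' ⊆ H := Finset.erase_subset e H
        have hfH' : f ∈ H' := Finset.mem_erase.2 ⟨hef.symm, hf⟩
        have hsuppU : H.biUnion id = (H'.biUnion id) ∪ e := by
          ext u
          simp only [Finset.mem_biUnion, Finset.mem_union, id_eq]
          constructor
          · rintro ⟨g, hg, hug⟩
            by_cases hge : g = e
            · exact Or.inr (hge ▸ hug)
            · exact Or.inl ⟨g, Finset.mem_erase.2 ⟨hge, hg⟩, hug⟩
          · rintro (⟨g, hg, hug⟩ | hu)
            · exact ⟨g, hsub hg, hug⟩
            · exact ⟨e, he, hu⟩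
        have hsuppI : (H'.biUnion id) ∩ e = {w} := by
          ext u
          simp only [Finset.mem_inter, Finset.mem_biUnion, Finset.mem_singleton, id_eq]
          constructor
          · rintro ⟨⟨g, hg, hug⟩, hue⟩
            obtain ⟨hge, hgH⟩ := Finset.mem_erase.1 hg
            by_contra huw
            exact hpriv u hue huw g hgH hge hug
          · rintro rfl
            exact ⟨⟨f, hfH', hwf⟩, hwe⟩
        have hkey : (H.biUnion id).card + 1 = (H'.biUnion id).card + e.card := by
          have h := Finset.card_union_add_card_inter (H'.biUnion id) e
          rw [hsuppI, Finset.card_singleton, ← hsuppU] at h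
          omega
        have hsum : ∑ x ∈ H', x.card.choose 2 + e.card.choose 2
            = ∑ x ∈ H, x.card.choose 2 := Finset.sum_erase_add H _ he
        have hcard' : H'.card ≤ n := by
          rw [hH', Finset.card_erase_of_mem he]; omega
        have hIH := ih H' hcard' (fun x hx => hunif x (hsub hx)) (linear_mono hsub hlin)
          (fun h => hforb (berge_mono hsub h)) ⟨f, hfH'⟩
        rcases hunif e he with h2 | h3
        · have : e.card.choose 2 = 1 := by rw [h2]; decide
          omega
        · have : e.card.choose 2 = 3 := by rw [h3]; decide
          omega
      · -- disjoint case
        push_neg at hmeet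
        have hdisj : ∀ x ∈ H, ∀ y ∈ H, x ≠ y → Disjoint (id x) (id y) := by
          intro x hx y hy hxy
          rw [id_eq, id_eq, Finset.disjoint_iff_inter_eq_empty]
          exact hmeet x hx y hy hxy
        have hsupp : (H.biUnion id).card = ∑ e ∈ H, e.card :=
          Finset.card_biUnion hdisj
        have hb : ∀ e ∈ H, 2 * e.card.choose 2 + 3 ≤ 3 * e.card := by
          intro e he
          rcases hunif e he with h | h <;> rw [h] <;> norm_num
        have h1 : ∑ e ∈ H, (2 * e.card.choose 2 + 3) ≤ ∑ e ∈ H, 3 * e.card :=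
          Finset.sum_le_sum hb
        rw [Finset.sum_add_distrib, Finset.sum_const, smul_eq_mul, ← Finset.mul_sum,
          ← Finset.mul_sum] at h1
        have hHpos : 1 ≤ H.card := Finset.card_pos.2 hne
        omega

lemma shadow_sum {H : Finset (Finset V)} (hlin : IsLinear H) :
    shadowEdgeCount H = ∑ e ∈ H, e.card.choose 2 := by
  unfold shadowEdgeCount
  rw [Finset.card_biUnion]
  · exact Finset.sum_congr rfl fun e _ => Finset.card_powersetCard 2 e
  · intro e he f hf hef
    rw [Function.onFun, Finset.disjoint_left]
    intro s hs1 hs2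
    obtain ⟨hse, hsc⟩ := Finset.mem_powersetCard.1 hs1
    obtain ⟨hsf, -⟩ := Finset.mem_powersetCard.1 hs2
    obtain ⟨x, y, hxy, rfl⟩ := Finset.card_eq_two.1 hsc
    exact not_two_common hlin he hf hef (hse (by simp)) (hsf (by simp))
      (hse (by simp)) (hsf (by simp)) hxy

end Aux

/-- An `n`-vertex `{2,3}`-uniform linear hypergraph with no Berge path of length `3`
has at most `3(n-1)/2` edges in its two-shadow. -/
theorem shadow_no_path_three {V : Type*} [Fintype V] [DecidableEq V]
    (H : Finset (Finset V))
    (hunif : ∀ e ∈ H, e.card = 2 ∨ e.card = 3)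
    (hlin : IsLinear H)
    (hforb : ¬ HasBergePath H 3) :
    2 * shadowEdgeCount H ≤ 3 * (Fintype.card V - 1) := by
  rcases H.eq_empty_or_nonempty with rfl | hne
  · simp [shadowEdgeCount]
  · have hk := key H.card H le_rfl hunif hlin hforb hne
    rw [← shadow_sum hlin] at hk
    have hle : (H.biUnion id).card ≤ Fintype.card V := Finset.card_le_univ _
    omega
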